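/- Assume N₊ = 0 and N₋ ≥ 1 (so P = 0 and dc̃₁ = 0). Then (i) an element ω ∈ Ω satisfies dω = 0 if and only if ω ∼ (b₀₀ + c̃₁b₀₁) + χ₁(b₁₀ + c̃₁b₁₁) for some polynomials b₀₀, b₀₁, b₁₀, b₁₁ lying in the subring ℂ[χ₂,…,χ_{N₋}] of R (complex constants when N₋ = 1); and (ii) (b₀₀ + c̃₁b₀₁) + χ₁(b₁₀ + c̃₁b₁₁) ∼ 0 for such coefficients if and only if b₀₀ = b₀₁ = b₁₀ = b₁₁ = 0. -/

import Mathlib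

/-!
D = 2, signature (1,1) supersymmetry algebra cohomology.
`R2 Np Nm = ℂ[ψ₁,…,ψ_{N₊}, χ₁,…,χ_{N₋}]`, `Om2` is the free module with basis
`{1, c̃₁, c̃₂, c̃₁c̃₂}`, and `d2` is the differential with `dc̃₁ = P`, `dc̃₂ = Q`.
-/

open MvPolynomial

noncomputable section

/-- The polynomial ring `ℂ[ψ₁,…,ψ_{N₊}, χ₁,…,χ_{N₋}]`; `Sum.inl i ↦ ψᵢ`, `Sum.inr i ↦ χᵢ`. -/
abbrev R2 (Np Nm : ℕ) : Type := MvPolynomial (Fin Np ⊕ Fin Nm) ℂ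

/-- `Ω`: free `R2`-module with basis `{1, c̃₁, c̃₂, c̃₁c̃₂}` (components 0,1,2,3). -/
abbrev Om2 (Np Nm : ℕ) : Type := Fin 4 → R2 Np Nm

/-- The ghost `ψᵢ`. -/
def ψ {Np Nm : ℕ} (i : Fin Np) : R2 Np Nm := X (Sum.inl i)

/-- The ghost `χᵢ`. -/
def χ {Np Nm : ℕ} (i : Fin Nm) : R2 Np Nm := X (Sum.inr i)

/-- `P = Σ ψᵢ²`. -/
def Pp (Np Nm : ℕ) : R2 Np Nm := ∑ i, ψ i ^ 2

/-- `Q = Σ χᵢ²`. -/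
def Qq (Np Nm : ℕ) : R2 Np Nm := ∑ i, χ i ^ 2

/-- The differential `d(ω₀ + c̃₁ω₁ + c̃₂ω₂ + c̃₁c̃₂ω₃) = Pω₁ + Qω₂ + (Pc̃₂ − Qc̃₁)ω₃`. -/
def d2 {Np Nm : ℕ} (ω : Om2 Np Nm) : Om2 Np Nm :=
  ![Pp Np Nm * ω 1 + Qq Np Nm * ω 2, -(Qq Np Nm * ω 3), Pp Np Nm * ω 3, 0]

/-- Embedding of `R` into `Ω` (coefficient of the basis element `1`). -/
def ofR {Np Nm : ℕ} (r : R2 Np Nm) : Om2 Np Nm := ![r, 0, 0, 0]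

/-- `ω ∼ ω'` iff `ω − ω' = dρ` for some `ρ`. -/
def Equiv2 {Np Nm : ℕ} (ω ω' : Om2 Np Nm) : Prop := ∃ ρ, ω - ω' = d2 ρ


/-- The subring `ℂ[χ₂,…,χ_{N₋}]` of `R2 0 Nm`. -/
def coefRingM (Nm : ℕ) (hm : 0 < Nm) : Subalgebra ℂ (R2 0 Nm) :=
  MvPolynomial.supported ℂ {v : Fin 0 ⊕ Fin Nm | v ≠ Sum.inr ⟨0, hm⟩}

namespace Aux
variable (Nm : ℕ) (hm : 0 < Nm)

abbrev a : Fin 0 ⊕ Fin Nm := Sum.inr ⟨0, hm⟩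
abbrev S := {v : Fin 0 ⊕ Fin Nm // v ≠ a Nm hm}

def φ : R2 0 Nm ≃ₐ[ℂ] Polynomial (MvPolynomial (S Nm hm) ℂ) :=
  (renameEquiv ℂ (Equiv.optionSubtypeNe (a Nm hm)).symm).trans
    (optionEquivLeft ℂ (S Nm hm))

lemma phi_rename (p : MvPolynomial (S Nm hm) ℂ) :
    φ Nm hm (rename Subtype.val p) = Polynomial.C p := by
  have h2 : φ Nm hm (rename Subtype.val p)
      = optionEquivLeft ℂ (S Nm hm) (rename Option.some p) := by
    show optionEquivLeft ℂ (S Nm hm)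
      ((rename (Equiv.optionSubtypeNe (a Nm hm)).symm) (rename Subtype.val p)) = _
    rw [rename_rename]
    have hc : (⇑(Equiv.optionSubtypeNe (a Nm hm)).symm ∘ Subtype.val : S Nm hm → Option (S Nm hm)) = some := by
      funext v; exact Equiv.optionSubtypeNe_symm_of_ne v.2
    rw [hc]
  rw [h2]
  have h3 : (optionEquivLeft ℂ (S Nm hm)).toAlgHom.comp (rename Option.some)
      = (Polynomial.CAlgHom).comp (AlgHom.id ℂ _) := by
    apply MvPolynomial.algHom_ext
    intro i
    simp [optionEquivLeft_X_some, Polynomial.CAlgHom]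
  have := congrFun (congrArg (DFunLike.coe) h3) p
  simpa [Polynomial.CAlgHom] using this

lemma mem_iff (b : R2 0 Nm) :
    b ∈ coefRingM Nm hm ↔ ∃ p, φ Nm hm b = Polynomial.C p := by
  constructor
  · intro hb
    rw [coefRingM, supported_eq_range_rename, AlgHom.mem_range] at hb
    obtain ⟨p, rfl⟩ := hb
    exact ⟨p, phi_rename Nm hm p⟩
  · rintro ⟨p, hp⟩
    rw [coefRingM, supported_eq_range_rename, AlgHom.mem_range]
    exact ⟨p, (φ Nm hm).injective ((phi_rename Nm hm p).trans hp.symm)⟩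

lemma phi_chi0 : φ Nm hm (χ ⟨0, hm⟩) = Polynomial.X := by
  show φ Nm hm (X (a Nm hm)) = Polynomial.X
  unfold φ
  simp [Equiv.optionSubtypeNe_symm_self, optionEquivLeft_X_none]

lemma phi_Q : ∃ q', φ Nm hm (Qq 0 Nm) = Polynomial.X ^ 2 + Polynomial.C q' := by
  have hsplit : Qq 0 Nm = χ ⟨0, hm⟩ ^ 2 + ∑ i ∈ Finset.univ.erase ⟨0, hm⟩, χ i ^ 2 := by
    rw [Qq, ← Finset.add_sum_erase _ _ (Finset.mem_univ _)]
  have hrest : (∑ i ∈ Finset.univ.erase (⟨0, hm⟩ : Fin Nm), χ (Np := 0) i ^ 2)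
      ∈ coefRingM Nm hm := by
    apply Subalgebra.sum_mem
    intro i hi
    apply pow_mem
    rw [coefRingM]
    show X (Sum.inr i) ∈ supported ℂ _
    rw [X_mem_supported (R := ℂ)]
    simpa using (Finset.mem_erase.mp hi).1
  obtain ⟨p, hp⟩ := (mem_iff Nm hm _).mp hrest
  refine ⟨p, ?_⟩
  rw [hsplit, map_add, map_pow, phi_chi0, hp]

lemma q_monic : (φ Nm hm (Qq 0 Nm)).Monic := by
  obtain ⟨q', hq⟩ := phi_Q Nm hm
  rw [hq]
  exact Polynomial.monic_X_pow_add
    (lt_of_le_of_lt Polynomial.degree_C_le (by norm_num))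

lemma q_deg : (φ Nm hm (Qq 0 Nm)).degree = 2 := by
  obtain ⟨q', hq⟩ := phi_Q Nm hm
  rw [hq]
  exact Polynomial.degree_X_pow_add_C (by norm_num) q'

include hm in
lemma Q_ne : Qq 0 Nm ≠ 0 := by
  intro h
  have := q_deg Nm hm
  rw [h, map_zero, Polynomial.degree_zero] at this
  exact absurd this (by decide)

/-- Division with remainder. -/
lemma division (r : R2 0 Nm) :
    ∃ b0 ∈ coefRingM Nm hm, ∃ b1 ∈ coefRingM Nm hm, ∃ s,
      r = b0 + χ ⟨0, hm⟩ * b1 + Qq 0 Nm * s := by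
  have hmon : (φ Nm hm (Qq 0 Nm)).Monic := q_monic Nm hm
  have key := Polynomial.modByMonic_add_div (φ Nm hm r) (φ Nm hm (Qq 0 Nm))
  have hdeg : ((φ Nm hm r) %ₘ (φ Nm hm (Qq 0 Nm))).degree ≤ 1 := by
    have h2 : ((φ Nm hm r) %ₘ (φ Nm hm (Qq 0 Nm))).degree < 2 := by
      rw [← q_deg Nm hm]
      exact Polynomial.degree_modByMonic_lt _ hmon
    rcases eq_or_ne ((φ Nm hm r) %ₘ (φ Nm hm (Qq 0 Nm))) 0 with h0 | h0
    · rw [h0, Polynomial.degree_zero]; exact bot_le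
    · rw [Polynomial.degree_eq_natDegree h0] at h2 ⊢
      exact_mod_cast Nat.lt_succ_iff.mp (by exact_mod_cast h2)
  have hrem := Polynomial.eq_X_add_C_of_degree_le_one hdeg
  refine ⟨(φ Nm hm).symm (Polynomial.C (((φ Nm hm r) %ₘ (φ Nm hm (Qq 0 Nm))).coeff 0)),
    (mem_iff Nm hm _).mpr ⟨_, (φ Nm hm).apply_symm_apply _⟩,
    (φ Nm hm).symm (Polynomial.C (((φ Nm hm r) %ₘ (φ Nm hm (Qq 0 Nm))).coeff 1)),
    (mem_iff Nm hm _).mpr ⟨_, (φ Nm hm).apply_symm_apply _⟩,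
    (φ Nm hm).symm ((φ Nm hm r) /ₘ (φ Nm hm (Qq 0 Nm))), ?_⟩
  apply (φ Nm hm).injective
  rw [map_add, map_add, map_mul, map_mul, phi_chi0,
    (φ Nm hm).apply_symm_apply, (φ Nm hm).apply_symm_apply,
    (φ Nm hm).apply_symm_apply]
  conv_lhs => rw [← key, hrem]
  ring

/-- Uniqueness of remainder. -/
lemma unique (b0 b1 s : R2 0 Nm) (h0 : b0 ∈ coefRingM Nm hm) (h1 : b1 ∈ coefRingM Nm hm)
    (h : b0 + χ ⟨0, hm⟩ * b1 = Qq 0 Nm * s) : b0 = 0 ∧ b1 = 0 := by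
  obtain ⟨p0, hp0⟩ := (mem_iff Nm hm _).mp h0
  obtain ⟨p1, hp1⟩ := (mem_iff Nm hm _).mp h1
  have h' := congrArg (φ Nm hm) h
  rw [map_add, map_mul, map_mul, phi_chi0, hp0, hp1] at h'
  have hs : φ Nm hm s = 0 := by
    by_contra hne
    have hdegL : (Polynomial.C p0 + Polynomial.X * Polynomial.C p1).degree ≤ 1 := by
      refine le_trans (Polynomial.degree_add_le _ _) (max_le ?_ ?_)
      · exact le_trans Polynomial.degree_C_le (by norm_num)
      · refine le_trans (Polynomial.degree_mul_le _ _) ?_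
        rw [Polynomial.degree_X]
        calc (1 : WithBot ℕ) + (Polynomial.C p1).degree ≤ 1 + 0 :=
              add_le_add le_rfl Polynomial.degree_C_le
          _ = 1 := add_zero 1
    have hdegR : (φ Nm hm (Qq 0 Nm) * φ Nm hm s).degree = 2 + (φ Nm hm s).degree := by
      rw [Polynomial.degree_mul, q_deg Nm hm]
    rw [h', hdegR] at hdegL
    have hge : (2 : WithBot ℕ) + 0 ≤ 2 + (φ Nm hm s).degree :=
      add_le_add le_rfl (Polynomial.zero_le_degree_iff.mpr hne)
    have h2 : (2 : WithBot ℕ) ≤ 1 := le_trans (by simpa using hge) hdegL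
    exact absurd h2 (by decide)
  rw [hs, mul_zero] at h'
  have hc0 := congrArg (fun g => Polynomial.coeff g 0) h'
  have hc1 := congrArg (fun g => Polynomial.coeff g 1) h'
  simp at hc0 hc1
  constructor
  · apply (φ Nm hm).injective; rw [hp0, hc0]; simp
  · apply (φ Nm hm).injective; rw [hp1, hc1]; simp


omit hm in
lemma Pp0 : Pp 0 Nm = 0 := by
  simp [Pp]

omit hm in
lemma d2_apply (ρ : Om2 0 Nm) :
    d2 ρ = ![Qq 0 Nm * ρ 2, -(Qq 0 Nm * ρ 3), 0, 0] := by
  rw [d2, Pp0 Nm]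
  simp

end Aux

/-- for `N₊ = 0`, `N₋ ≥ 1` (so `P = 0`, `dc̃₁ = 0`),
(i) `dω = 0` iff `ω ∼ (b₀₀ + c̃₁b₀₁) + χ₁(b₁₀ + c̃₁b₁₁)` with coefficients in
`ℂ[χ₂,…,χ_{N₋}]`; (ii) such a combination is `∼ 0` iff all coefficients vanish. -/
theorem stmt2 (Nm : ℕ) (hm : 0 < Nm) :
    (∀ ω : Om2 0 Nm, d2 ω = 0 ↔
      ∃ b00 ∈ coefRingM Nm hm, ∃ b01 ∈ coefRingM Nm hm,
      ∃ b10 ∈ coefRingM Nm hm, ∃ b11 ∈ coefRingM Nm hm,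
        Equiv2 ω ![b00 + χ ⟨0, hm⟩ * b10, b01 + χ ⟨0, hm⟩ * b11, 0, 0])
    ∧
    (∀ b00 b01 b10 b11 : R2 0 Nm,
      b00 ∈ coefRingM Nm hm → b01 ∈ coefRingM Nm hm →
      b10 ∈ coefRingM Nm hm → b11 ∈ coefRingM Nm hm →
      (Equiv2 ![b00 + χ ⟨0, hm⟩ * b10, b01 + χ ⟨0, hm⟩ * b11, 0, 0] 0 ↔
        b00 = 0 ∧ b01 = 0 ∧ b10 = 0 ∧ b11 = 0)) := by
  have hQ := Aux.Q_ne Nm hm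
  constructor
  · intro ω
    constructor
    · intro hd
      rw [Aux.d2_apply Nm] at hd
      have h2 : ω 2 = 0 := by
        have h0 := congrFun hd 0
        simp only [Matrix.cons_val_zero, Pi.zero_apply] at h0
        rcases mul_eq_zero.mp h0 with h | h
        · exact absurd h hQ
        · exact h
      have h3 : ω 3 = 0 := by
        have h1 := congrFun hd 1
        simp only [Matrix.cons_val_one, Matrix.head_cons, Matrix.cons_val_zero, Pi.zero_apply, neg_eq_zero] at h1
        rcases mul_eq_zero.mp h1 with h | h
        · exact absurd h hQ
        · exact h
      obtain ⟨b00, hb00, b10, hb10, s0, hs0⟩ := Aux.division Nm hm (ω 0)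
      obtain ⟨b01, hb01, b11, hb11, s1, hs1⟩ := Aux.division Nm hm (ω 1)
      refine ⟨b00, hb00, b01, hb01, b10, hb10, b11, hb11, ![0, 0, s0, -s1], ?_⟩
      rw [Aux.d2_apply Nm]
      funext i
      fin_cases i
      · show ω 0 - (b00 + χ ⟨0, hm⟩ * b10) = Qq 0 Nm * s0
        rw [hs0]; ring
      · show ω 1 - (b01 + χ ⟨0, hm⟩ * b11) = -(Qq 0 Nm * (-s1))
        rw [hs1]; ring
      · show ω 2 - 0 = 0
        rw [h2, sub_zero]
      · show ω 3 - 0 = 0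
        rw [h3, sub_zero]
    · rintro ⟨b00, _, b01, _, b10, _, b11, _, ρ, hρ⟩
      rw [Aux.d2_apply Nm] at hρ
      have h2 : ω 2 = 0 := by
        have := congrFun hρ 2
        simpa using this
      have h3 : ω 3 = 0 := by
        have := congrFun hρ 3
        simpa using this
      rw [Aux.d2_apply Nm, h2, h3]
      funext i
      fin_cases i <;> simp
  · intro b00 b01 b10 b11 h00 h01 h10 h11
    constructor
    · rintro ⟨ρ, hρ⟩
      rw [Aux.d2_apply Nm] at hρ
      have e0 : b00 + χ ⟨0, hm⟩ * b10 = Qq 0 Nm * ρ 2 := by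
        have := congrFun hρ 0
        simpa using this
      have e1 : b01 + χ ⟨0, hm⟩ * b11 = Qq 0 Nm * (-(ρ 3)) := by
        have := congrFun hρ 1
        simp at this
        rw [this]; ring
      obtain ⟨ha, hb⟩ := Aux.unique Nm hm _ _ _ h00 h10 e0
      obtain ⟨hc, hd⟩ := Aux.unique Nm hm _ _ _ h01 h11 e1
      exact ⟨ha, hc, hb, hd⟩
    · rintro ⟨rfl, rfl, rfl, rfl⟩
      refine ⟨0, ?_⟩
      rw [Aux.d2_apply Nm]
      funext i
      fin_cases i <;> simp
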